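/- Let |φ₀⟩, |φ₁⟩ be unit vectors with |⟨φ₀|φ₁⟩| = cos θ, 0 < θ < π/2. Then there exists a unit vector |χ⟩ with |⟨χ|φ₀⟩|² = |⟨χ|φ₁⟩|² = cos²(θ/2), and for any unit vector |χ'⟩, min(|⟨χ'|φ₀⟩|², |⟨χ'|φ₁⟩|²) ≤ cos²(θ/2). -/

import Mathlib

open Complex RCLike

local notation "⟪" x ", " y "⟫" => @inner ℂ _ _ x y

lemma key {E : Type*} [NormedAddCommGroup E] [InnerProductSpace ℂ E]
    (u v w : E) (hu : ⟪u, u⟫ = 1) (hv : ⟪v, v⟫ = 1) (hw : ⟪w, w⟫ = 1)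
    (p q : ℝ) (hp : 0 ≤ p) (hq : 0 ≤ q) :
    2*p*‖⟪w, u⟫‖ + 2*q*‖⟪w, v⟫‖ ≤
      1 + p^2 + q^2 + 2*p*q*‖⟪u, v⟫‖ := by
  set x : ℂ := ⟪w, u⟫ with hx
  set y : ℂ := ⟪w, v⟫ with hy
  set c : ℂ := ⟪u, v⟫ with hc
  set α : ℂ := p * (starRingEnd ℂ) x / (‖x‖ : ℂ) with hα
  set β : ℂ := q * (starRingEnd ℂ) y / (‖y‖ : ℂ) with hβ
  have hconjmul : ∀ z : ℂ, (starRingEnd ℂ) z * z = ((‖z‖ : ℝ) : ℂ)^2 := by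
    intro z
    rw [mul_comm, Complex.mul_conj, Complex.normSq_eq_norm_sq]
    push_cast; ring
  have hαx : α * x = ((p * ‖x‖ : ℝ) : ℂ) := by
    by_cases h : x = 0
    · simp [hα, h]
    · have hax : ((‖x‖ : ℝ) : ℂ) ≠ 0 := by
        simpa using (norm_ne_zero_iff.mpr h)
      rw [hα, div_mul_eq_mul_div, mul_assoc, hconjmul, div_eq_iff hax]
      push_cast; ring
  have hβy : β * y = ((q * ‖y‖ : ℝ) : ℂ) := by
    by_cases h : y = 0
    · simp [hβ, h]
    · have hay : ((‖y‖ : ℝ) : ℂ) ≠ 0 := by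
        simpa using (norm_ne_zero_iff.mpr h)
      rw [hβ, div_mul_eq_mul_div, mul_assoc, hconjmul, div_eq_iff hay]
      push_cast; ring
  have habsα : ‖α‖ ≤ p := by
    rw [hα]
    by_cases h : x = 0
    · simp [h, hp]
    · rw [norm_div, norm_mul]
      simp [Complex.norm_conj, Complex.norm_real, _root_.abs_of_nonneg hp,
        norm_ne_zero_iff.mpr h]
  have habsβ : ‖β‖ ≤ q := by
    rw [hβ]
    by_cases h : y = 0
    · simp [h, hq]
    · rw [norm_div, norm_mul]
      simp [Complex.norm_conj, Complex.norm_real, _root_.abs_of_nonneg hq,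
        norm_ne_zero_iff.mpr h]
  have h0 : 0 ≤ Complex.re ⟪w - α•u - β•v, w - α•u - β•v⟫ := by
    have h := @inner_self_nonneg ℂ _ _ _ _ (w - α•u - β•v)
    rwa [RCLike.re_to_complex] at h
  have hexp : ⟪w - α•u - β•v, w - α•u - β•v⟫
      = 1 - (α*x + (starRingEnd ℂ) (α*x)) - (β*y + (starRingEnd ℂ) (β*y))
        + (starRingEnd ℂ) α * α + (starRingEnd ℂ) β * β
        + ((starRingEnd ℂ) α * β * c + (starRingEnd ℂ) ((starRingEnd ℂ) α * β * c)) := by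
    simp only [inner_sub_left, inner_sub_right, inner_smul_left, inner_smul_right,
      hu, hv, hw]
    have h1 : inner ℂ u w = (starRingEnd ℂ) x := by
      rw [hx]; exact (inner_conj_symm u w).symm
    have h2 : inner ℂ v w = (starRingEnd ℂ) y := by
      rw [hy]; exact (inner_conj_symm v w).symm
    have h3 : inner ℂ v u = (starRingEnd ℂ) c := by
      rw [hc]; exact (inner_conj_symm v u).symm
    rw [← hx, ← hy, h1, h2, h3]
    simp only [map_mul, map_sub, map_add, Complex.conj_conj]
    ring
  have hre : (0:ℝ) ≤ 1 - 2*(p*‖x‖) - 2*(q*‖y‖)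
      + Complex.normSq α + Complex.normSq β + 2*((starRingEnd ℂ) α * β * c).re := by
    rw [hexp, hαx, hβy,
      show (starRingEnd ℂ) α * α = (Complex.normSq α : ℂ) by rw [mul_comm, Complex.mul_conj],
      show (starRingEnd ℂ) β * β = (Complex.normSq β : ℂ) by rw [mul_comm, Complex.mul_conj]] at h0
    simp only [Complex.add_re, Complex.sub_re, Complex.conj_re, Complex.ofReal_re,
      Complex.one_re] at h0
    linarith
  have hz : ((starRingEnd ℂ) α * β * c).re ≤ p * q * ‖c‖ := by
    calc ((starRingEnd ℂ) α * β * c).re ≤ ‖(starRingEnd ℂ) α * β * c‖ :=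
          Complex.re_le_norm _
      _ = ‖α‖ * ‖β‖ * ‖c‖ := by
          rw [norm_mul, norm_mul, Complex.norm_conj]
      _ ≤ p * q * ‖c‖ := by
          apply mul_le_mul_of_nonneg_right _ (norm_nonneg c)
          exact mul_le_mul habsα habsβ (norm_nonneg β) hp
  have hnα : Complex.normSq α ≤ p^2 := by
    rw [← Complex.sq_norm]
    exact pow_le_pow_left₀ (norm_nonneg α) habsα 2
  have hnβ : Complex.normSq β ≤ q^2 := by
    rw [← Complex.sq_norm]
    exact pow_le_pow_left₀ (norm_nonneg β) habsβ 2
  linarith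

lemma norm_eq_one_of_inner_self {E : Type*} [NormedAddCommGroup E] [InnerProductSpace ℂ E]
    {x : E} (h : ⟪x, x⟫ = 1) : ‖x‖ = 1 := by
  have h1 := inner_self_eq_norm_sq_to_K (𝕜 := ℂ) x
  rw [h] at h1
  have h2 : ‖x‖ ^ 2 = 1 := by
    have h5 := inner_self_eq_norm_sq (𝕜 := ℂ) x
    rw [h] at h5
    simpa using h5.symm
  rw [← Real.sqrt_sq (norm_nonneg x), h2, Real.sqrt_one]

lemma realpart {cθ a b : ℝ} (hcθ : 0 < cθ) (hcθ1 : cθ < 1)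
    (ha0 : 0 ≤ a) (hb0 : 0 ≤ b) (ha1 : a ≤ 1) (hb1 : b ≤ 1)
    (hkeyall : ∀ p q : ℝ, 0 ≤ p → 0 ≤ q →
      2*p*a + 2*q*b ≤ 1 + p^2 + q^2 + 2*p*q*cθ) :
    min (a^2) (b^2) ≤ (1 + cθ)/2 := by
  have hsq : cθ^2 ≤ (1 + cθ)/2 := by nlinarith
  by_cases hA : a ≤ cθ
  · have : a^2 ≤ cθ^2 := by nlinarith
    calc min (a^2) (b^2) ≤ a^2 := min_le_left _ _
      _ ≤ (1 + cθ)/2 := by linarith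
  by_cases hB : b ≤ cθ
  · have : b^2 ≤ cθ^2 := by nlinarith
    calc min (a^2) (b^2) ≤ b^2 := min_le_right _ _
      _ ≤ (1 + cθ)/2 := by linarith
  push_neg at hA hB
  set D : ℝ := 1 - cθ^2 with hDdef
  have hD : 0 < D := by nlinarith
  set p : ℝ := (a - cθ*b)/D with hpdef
  set q : ℝ := (b - cθ*a)/D with hqdef
  have hp : 0 ≤ p := by
    apply div_nonneg _ hD.le
    nlinarith
  have hq : 0 ≤ q := by
    apply div_nonneg _ hD.le
    nlinarith
  have hkey := hkeyall p q hp hq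
  have hpD : p * D = a - cθ*b := by
    rw [hpdef]; field_simp
  have hqD : q * D = b - cθ*a := by
    rw [hqdef]; field_simp
  have hk2 : (D*D) * (2*p*a + 2*q*b) ≤ (D*D) * (1 + p^2 + q^2 + 2*p*q*cθ) :=
    mul_le_mul_of_nonneg_left hkey (by positivity)
  have e1 : (D*D) * (2*p*a + 2*q*b) = 2*(p*D)*a*D + 2*(q*D)*b*D := by ring
  have e2 : (D*D) * (1 + p^2 + q^2 + 2*p*q*cθ)
      = D*D + (p*D)^2 + (q*D)^2 + 2*(p*D)*(q*D)*cθ := by ring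
  rw [e1, e2, hpD, hqD] at hk2
  have h4 : D * (a^2 + b^2 - 2*cθ*a*b) ≤ D * D := by nlinarith [hk2]
  have hS : a^2 + b^2 - 2*cθ*a*b ≤ D := le_of_mul_le_mul_left h4 hD
  have hsum : a^2 + b^2 ≤ 1 + cθ := by nlinarith [sq_nonneg (a - b)]
  have hmin : 2 * min (a^2) (b^2) ≤ a^2 + b^2 := by
    have := min_le_left (a^2) (b^2)
    have := min_le_right (a^2) (b^2)
    linarith
  linarith

set_option maxHeartbeats 1000000 in
theorem stmt14 {d : ℕ} (φ₀ φ₁ : Fin d → ℂ)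
    (hφ₀ : dotProduct (star φ₀) φ₀ = 1)
    (hφ₁ : dotProduct (star φ₁) φ₁ = 1)
    (θ : ℝ) (hθ0 : 0 < θ) (hθ1 : θ < Real.pi / 2)
    (hover : ‖dotProduct (star φ₀) φ₁‖ = Real.cos θ) :
    (∃ χ : Fin d → ℂ, dotProduct (star χ) χ = 1 ∧
        ‖dotProduct (star χ) φ₀‖ ^ 2 = Real.cos (θ/2) ^ 2 ∧
        ‖dotProduct (star χ) φ₁‖ ^ 2 = Real.cos (θ/2) ^ 2) ∧
      ∀ χ' : Fin d → ℂ, dotProduct (star χ') χ' = 1 →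
        min (‖dotProduct (star χ') φ₀‖ ^ 2)
            (‖dotProduct (star χ') φ₁‖ ^ 2) ≤ Real.cos (θ/2) ^ 2 := by
  have hπ := Real.pi_pos
  set cθ := Real.cos θ with hcθdef
  have hcθ : 0 < cθ := Real.cos_pos_of_mem_Ioo ⟨by linarith, hθ1⟩
  have hcθ1 : cθ < 1 := by
    have := Real.cos_lt_cos_of_nonneg_of_le_pi (le_refl 0) (by linarith) hθ0
    simpa using this
  have hhalf : Real.cos (θ/2) ^ 2 = (1 + cθ)/2 := by
    have h := Real.cos_sq (θ/2)
    rw [show 2 * (θ/2) = θ by ring] at h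
    rw [h]; ring
  set F := (WithLp.equiv 2 (Fin d → ℂ)).symm with hF
  have hb : ∀ x y : Fin d → ℂ, inner ℂ (F x) (F y) = dotProduct (star x) y :=
    fun x y => (EuclideanSpace.inner_toLp_toLp x y).trans (dotProduct_comm _ _)
  set Φ₀ : EuclideanSpace ℂ (Fin d) := F φ₀ with hΦ₀def
  set Φ₁ : EuclideanSpace ℂ (Fin d) := F φ₁ with hΦ₁def
  have hΦ₀ : ⟪Φ₀, Φ₀⟫ = 1 := by rw [hb]; exact hφ₀
  have hΦ₁ : ⟪Φ₁, Φ₁⟫ = 1 := by rw [hb]; exact hφ₁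
  set c : ℂ := ⟪Φ₀, Φ₁⟫ with hcdef
  have habs : ‖c‖ = cθ := by rw [hcdef, hb]; exact hover
  have hcne : (cθ : ℂ) ≠ 0 := by
    simpa using ne_of_gt hcθ
  have hcc : (starRingEnd ℂ) c * c = ((cθ : ℝ) : ℂ)^2 := by
    rw [mul_comm, Complex.mul_conj, Complex.normSq_eq_norm_sq, habs]
    push_cast; ring
  set ω : ℂ := (starRingEnd ℂ) c / (cθ : ℂ) with hωdef
  have hωc : ω * c = (cθ : ℂ) := by
    rw [hωdef, div_mul_eq_mul_div, hcc]
    field_simp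
  have hconjω : (starRingEnd ℂ) ω = c / (cθ : ℂ) := by
    rw [hωdef, map_div₀, Complex.conj_conj, Complex.conj_ofReal]
  have hconjωc : (starRingEnd ℂ) ω * (starRingEnd ℂ) c = (cθ : ℂ) := by
    rw [← map_mul, hωc, Complex.conj_ofReal]
  have hωω : (starRingEnd ℂ) ω * ω = 1 := by
    rw [hconjω, hωdef, div_mul_div_comm, mul_comm c _, hcc, ← sq,
      div_self (pow_ne_zero 2 hcne)]
  -- the candidate vector
  set ψ : EuclideanSpace ℂ (Fin d) := Φ₀ + ω • Φ₁ with hψdef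
  have hΦ₁₀ : ⟪Φ₁, Φ₀⟫ = (starRingEnd ℂ) c := (inner_conj_symm Φ₁ Φ₀).symm
  have hψψ : ⟪ψ, ψ⟫ = (((2 + 2*cθ : ℝ)) : ℂ) := by
    rw [hψdef]
    simp only [inner_add_left, inner_add_right, inner_smul_left, inner_smul_right,
      hΦ₀, hΦ₁, hΦ₁₀, ← hcdef]
    push_cast
    have hωω' : ω * (starRingEnd ℂ) ω = 1 := by rw [mul_comm]; exact hωω
    linear_combination hωc + hωω' + hconjωc
  have hψ0 : ⟪ψ, Φ₀⟫ = ((1 + cθ : ℝ) : ℂ) := by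
    rw [hψdef]
    simp only [inner_add_left, inner_smul_left, hΦ₀, hΦ₁₀]
    rw [hconjωc]
    push_cast; ring
  have hψ1 : ⟪ψ, Φ₁⟫ = c + c / (cθ : ℂ) := by
    rw [hψdef]
    simp only [inner_add_left, inner_smul_left, hΦ₁, ← hcdef]
    rw [mul_one, hconjω]
  have habsψ1 : ‖⟪ψ, Φ₁⟫‖ = 1 + cθ := by
    rw [hψ1, show c + c / (cθ : ℂ) = c * (((1 + cθ)/cθ : ℝ) : ℂ) by push_cast; field_simp; ring]
    rw [norm_mul, habs, Complex.norm_real, Real.norm_eq_abs, _root_.abs_of_nonneg (by positivity)]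
    field_simp
  set s : ℝ := Real.sqrt (2 + 2*cθ) with hsdef
  have hspos : 0 < s := Real.sqrt_pos.mpr (by linarith)
  have hs2 : s^2 = 2 + 2*cθ := Real.sq_sqrt (by linarith)
  set χE : EuclideanSpace ℂ (Fin d) := ((s⁻¹ : ℝ) : ℂ) • ψ with hχEdef
  have hχE0 : ⟪χE, Φ₀⟫ = ((s⁻¹ * (1 + cθ) : ℝ) : ℂ) := by
    rw [hχEdef, inner_smul_left, hψ0, Complex.conj_ofReal]
    push_cast; ring
  have hχEabs1 : ‖⟪χE, Φ₁⟫‖ = s⁻¹ * (1 + cθ) := by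
    rw [hχEdef, inner_smul_left, norm_mul, Complex.norm_conj, Complex.norm_real, Real.norm_eq_abs, habsψ1,
      _root_.abs_of_nonneg (by positivity)]
  have hχEχE : ⟪χE, χE⟫ = 1 := by
    rw [hχEdef, inner_smul_left, inner_smul_right, hψψ, Complex.conj_ofReal]
    rw [show (((s⁻¹:ℝ)):ℂ) * ((((s⁻¹:ℝ)):ℂ) * ((2 + 2*cθ : ℝ) : ℂ))
        = (((s⁻¹ * s⁻¹ * (2 + 2*cθ) : ℝ)) : ℂ) by push_cast; ring]
    rw [show s⁻¹ * s⁻¹ * (2 + 2*cθ) = 1 by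
      rw [← hs2]; field_simp]
    norm_num
  have hov : (s⁻¹ * (1 + cθ))^2 = (1 + cθ)/2 := by
    field_simp
    rw [hs2]; ring
  constructor
  · refine ⟨WithLp.equiv 2 (Fin d → ℂ) χE, ?_, ?_, ?_⟩
    · rw [← hb]
      simp only [hF, Equiv.symm_apply_apply]
      exact hχEχE
    · rw [← hb]
      simp only [hF, Equiv.symm_apply_apply]
      rw [← hΦ₀def, hχE0, hhalf, Complex.norm_real, Real.norm_eq_abs, _root_.abs_of_nonneg (by positivity), hov]
    · rw [← hb]
      simp only [hF, Equiv.symm_apply_apply]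
      rw [← hΦ₁def, hχEabs1, hhalf, hov]
  · intro χ' hχ'
    rw [← hb χ' φ₀, ← hb χ' φ₁]
    rw [← hb χ' χ'] at hχ'
    set X : EuclideanSpace ℂ (Fin d) := F χ' with hXdef
    have hX : ⟪X, X⟫ = 1 := hχ'
    have hX1 : ‖X‖ = 1 := norm_eq_one_of_inner_self hX
    have hΦ₀n : ‖Φ₀‖ = 1 := norm_eq_one_of_inner_self hΦ₀
    have hΦ₁n : ‖Φ₁‖ = 1 := norm_eq_one_of_inner_self hΦ₁
    set a : ℝ := ‖⟪X, Φ₀⟫‖ with hadef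
    set b : ℝ := ‖⟪X, Φ₁⟫‖ with hbdef
    have ha0 : 0 ≤ a := norm_nonneg _
    have hb0 : 0 ≤ b := norm_nonneg _
    have ha1 : a ≤ 1 := by
      have h := norm_inner_le_norm (𝕜 := ℂ) X Φ₀
      rwa [hX1, hΦ₀n, one_mul] at h
    have hb1 : b ≤ 1 := by
      have h := norm_inner_le_norm (𝕜 := ℂ) X Φ₁
      rwa [hX1, hΦ₁n, one_mul] at h
    have hkeyall : ∀ p q : ℝ, 0 ≤ p → 0 ≤ q →
        2*p*a + 2*q*b ≤ 1 + p^2 + q^2 + 2*p*q*cθ := by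
      intro p q hp hq
      have hkey := key Φ₀ Φ₁ X hΦ₀ hΦ₁ hX p q hp hq
      rwa [← hadef, ← hbdef, ← hcdef, habs] at hkey
    rw [hhalf]
    exact realpart hcθ hcθ1 ha0 hb0 ha1 hb1 hkeyall
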